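/- Let U be uniform on [0,1] and F a continuous, strictly increasing distribution function on ℝ. Then F^{-1}(U) has distribution function F, and conversely if Y has continuous distribution function F then F(Y) is uniform on [0,1]. Consequently, under the partial copula setup with Y ⫫ Z | X and F_{Y|X}(·|x), F_{Z|X}(·|x) continuous for a.e. x, the joint distribution of (U, V) = (F_{Y|X}(Y|X), F_{Z|X}(Z|X)) is the product of two uniform [0,1] laws, i.e., the partial copula is the independence copula. -/

import Mathlib

open MeasureTheory ProbabilityTheory Set

section Helpers

/-- Probability integral transform: if `F` is the (continuous) cdf of `ν`, then `ν.map F` is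
uniform on `[0,1]`. -/
lemma uniform_of_cdf (ν : Measure ℝ) [IsProbabilityMeasure ν] (F : ℝ → ℝ)
    (hF : ∀ y, F y = (ν (Set.Iic y)).toReal) (hFc : Continuous F) :
    ν.map F = volume.restrict (Set.Icc 0 1) := by
  have hmono : Monotone F := by
    intro a b hab
    rw [hF a, hF b]
    exact ENNReal.toReal_mono (measure_ne_top _ _) (measure_mono (Iic_subset_Iic.2 hab))
  have hF0 : ∀ y, 0 ≤ F y := fun y => by rw [hF y]; exact ENNReal.toReal_nonneg
  have hF1 : ∀ y, F y ≤ 1 := fun y => by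
    rw [hF y]; exact ENNReal.toReal_le_of_le_ofReal one_pos.le (by simpa using prob_le_one)
  have hνIic : ∀ y, ν (Set.Iic y) = ENNReal.ofReal (F y) := fun y => by
    rw [hF y, ENNReal.ofReal_toReal (measure_ne_top _ _)]
  haveI : IsProbabilityMeasure (ν.map F) :=
    Measure.isProbabilityMeasure_map hFc.measurable.aemeasurable
  refine Measure.ext_of_Iic _ _ (fun t => ?_)
  rw [Measure.map_apply hFc.measurable measurableSet_Iic]
  have hIic : F ⁻¹' Set.Iic t = {y | F y ≤ t} := rfl
  rcases lt_or_ge t 0 with ht | ht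
  · have h1 : F ⁻¹' Set.Iic t = ∅ := by
      ext y; simp only [mem_preimage, mem_Iic, mem_empty_iff_false, iff_false, not_le]
      exact lt_of_lt_of_le ht (hF0 y)
    have h2 : Set.Iic t ∩ Set.Icc (0:ℝ) 1 = ∅ := by
      ext y; simp only [mem_inter_iff, mem_Iic, mem_Icc, mem_empty_iff_false, iff_false]
      rintro ⟨h1, h2, -⟩; linarith
    rw [h1, Measure.restrict_apply measurableSet_Iic, h2]; simp
  rcases le_or_gt 1 t with ht1 | ht1
  · have h1 : F ⁻¹' Set.Iic t = Set.univ := by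
      ext y; simp only [mem_preimage, mem_Iic, mem_univ, iff_true]
      exact (hF1 y).trans ht1
    have h2 : Set.Iic t ∩ Set.Icc (0:ℝ) 1 = Set.Icc 0 1 := by
      rw [inter_eq_self_of_subset_right]
      intro y hy; exact hy.2.trans ht1
    rw [h1, Measure.restrict_apply measurableSet_Iic, h2, measure_univ, Real.volume_Icc]
    norm_num
  · -- 0 ≤ t < 1
    have hRHS : volume.restrict (Set.Icc (0:ℝ) 1) (Set.Iic t) = ENNReal.ofReal t := by
      rw [Measure.restrict_apply measurableSet_Iic]
      have : Set.Iic t ∩ Set.Icc (0:ℝ) 1 = Set.Icc 0 t := by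
        ext y
        simp only [mem_inter_iff, mem_Iic, mem_Icc]
        constructor
        · rintro ⟨h1, h2, -⟩; exact ⟨h2, h1⟩
        · rintro ⟨h1, h2⟩; exact ⟨h2, h1, le_trans h2 ht1.le⟩
      rw [this, Real.volume_Icc, sub_zero]
    rw [hRHS]
    by_cases hA : ({y | F y ≤ t}).Nonempty
    · -- A nonempty
      obtain ⟨y1, hy1⟩ : ∃ y1, t < F y1 := by
        by_contra h
        push_neg at h
        have h1 : Filter.Tendsto (fun y => ν (Set.Iic y)) Filter.atTop (nhds (ν Set.univ)) :=
          tendsto_measure_Iic_atTop ν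
        have h2 : Filter.Tendsto F Filter.atTop (nhds 1) := by
          have := (ENNReal.tendsto_toReal (measure_ne_top ν Set.univ)).comp h1
          simp only [measure_univ, ENNReal.toReal_one] at this
          convert this using 1
          ext y; exact hF y
        have := le_of_tendsto h2 (Filter.Eventually.of_forall h)
        linarith
      have hbdd : BddAbove {y | F y ≤ t} := by
        refine ⟨y1, fun y hy => ?_⟩
        by_contra h
        push_neg at h
        exact absurd (le_trans (hmono h.le) hy) (not_le.2 hy1)
      have hclosed : IsClosed {y | F y ≤ t} := isClosed_le hFc continuous_const
      set a := sSup {y | F y ≤ t} with ha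
      have haA : a ∈ {y | F y ≤ t} := hclosed.csSup_mem hA hbdd
      have hAeq : {y | F y ≤ t} = Set.Iic a := by
        ext y
        simp only [mem_setOf_eq, mem_Iic]
        constructor
        · exact fun hy => le_csSup hbdd hy
        · exact fun hy => le_trans (hmono hy) haA
      have hFa : F a = t := by
        refine le_antisymm haA ?_
        by_contra h
        push_neg at h
        -- F a < t, find c > a with F c = t
        have hy1a : a ≤ y1 := by
          by_contra h2
          push_neg at h2
          exact absurd (haA.trans_lt hy1) (not_lt.2 (hmono h2.le))
        obtain ⟨c, hc, hFc'⟩ : ∃ c ∈ Set.Icc a y1, F c = t := by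
          have : t ∈ Set.Icc (F a) (F y1) := ⟨h.le, hy1.le⟩
          obtain ⟨c, hc, hfc⟩ := intermediate_value_Icc hy1a hFc.continuousOn this
          exact ⟨c, hc, hfc⟩
        have : c ∈ {y | F y ≤ t} := le_of_eq hFc'
        rw [hAeq] at this
        have : F c ≤ F a := hmono this
        rw [hFc'] at this
        linarith
      rw [hIic, hAeq, hνIic, hFa]
    · -- A empty
      rw [hIic, not_nonempty_iff_eq_empty.1 hA, measure_empty]
      -- show t = 0
      have htle : t ≤ 0 := by
        by_contra h
        push_neg at h
        have hiInter : (⋂ n : ℕ, Set.Iic (-(n:ℝ))) = ∅ := by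
          ext x
          simp only [mem_iInter, mem_Iic, mem_empty_iff_false, iff_false, not_forall, not_le]
          obtain ⟨n, hn⟩ := exists_nat_gt (-x)
          exact ⟨n, by linarith⟩
        have htend : Filter.Tendsto (fun n : ℕ => ν (Set.Iic (-(n:ℝ)))) Filter.atTop (nhds 0) := by
          have := tendsto_measure_iInter_atTop (μ := ν) (s := fun n : ℕ => Set.Iic (-(n:ℝ)))
            (fun n => measurableSet_Iic.nullMeasurableSet)
            (fun i j hij => Iic_subset_Iic.2 (by simp; exact_mod_cast hij))
            ⟨0, measure_ne_top _ _⟩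
          rwa [hiInter, measure_empty] at this
        have hge : ∀ n : ℕ, ENNReal.ofReal t ≤ ν (Set.Iic (-(n:ℝ))) := by
          intro n
          rw [hνIic]
          refine ENNReal.ofReal_le_ofReal ?_
          have : ¬ (F (-(n:ℝ)) ≤ t) := fun hc => hA ⟨_, hc⟩
          linarith [not_le.1 this]
        have := ge_of_tendsto htend (Filter.Eventually.of_forall hge)
        simp only [nonpos_iff_eq_zero, ENNReal.ofReal_eq_zero] at this
        linarith
      have : t = 0 := le_antisymm htle ht
      rw [this, ENNReal.ofReal_zero]


/-- Joint measurability of `(x, y) ↦ κ x (Iic y)`. -/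
lemma measurable_kernel_Iic {E : Type*} [MeasurableSpace E] (κ : Kernel E ℝ)
    [IsSFiniteKernel κ] : Measurable fun p : E × ℝ => κ p.1 (Set.Iic p.2) := by
  have ht : MeasurableSet {q : (E × ℝ) × ℝ | q.2 ≤ q.1.2} :=
    measurableSet_le measurable_snd measurable_fst.snd
  have h := Kernel.measurable_kernel_prodMk_left
    (κ := Kernel.comap κ (Prod.fst : E × ℝ → E) measurable_fst) ht
  simp only [Kernel.comap_apply, Set.preimage_setOf_eq] at h
  exact h

end Helpers

/-- (i) If `U` is uniform on `[0,1]` and `F` is a continuous strictly increasing distribution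
function with inverse `g`, then `g ∘ U` has distribution function `F`; (ii) conversely if `Y`
has continuous distribution function `F` then `F ∘ Y` is uniform on `[0,1]`; (iii) under the
partial copula setup with `Y ⫫ Z | X`, the joint law of `(U,V)` is the product of two uniform
`[0,1]` laws: the partial copula is the independence copula. -/
theorem partial_copula_stmt13
    {Ω E : Type*} [MeasurableSpace Ω] [StandardBorelSpace Ω] [MeasurableSpace E]
    (μ : Measure Ω) [IsProbabilityMeasure μ] :
    -- (i)
    (∀ (U : Ω → ℝ), Measurable U → μ.map U = volume.restrict (Set.Icc 0 1) →
      ∀ (F : ℝ → ℝ), Continuous F → StrictMono F →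
        Filter.Tendsto F Filter.atBot (nhds 0) → Filter.Tendsto F Filter.atTop (nhds 1) →
      ∀ (g : ℝ → ℝ), Measurable g → (∀ u ∈ Set.Ioo (0:ℝ) 1, F (g u) = u) →
        ∀ y : ℝ, ((μ.map (fun ω => g (U ω))) (Set.Iic y)).toReal = F y) ∧
    -- (ii)
    (∀ (Y : Ω → ℝ), Measurable Y →
      ∀ (F : ℝ → ℝ), (∀ y, F y = ((μ.map Y) (Set.Iic y)).toReal) → Continuous F →
        μ.map (fun ω => F (Y ω)) = volume.restrict (Set.Icc 0 1)) ∧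
    -- (iii)
    (∀ (X : Ω → E) (Y Z : Ω → ℝ), Measurable X → Measurable Y → Measurable Z →
      ∀ (F G : E → ℝ → ℝ),
        (∀ x y, F x y = ((condDistrib Y X μ) x (Set.Iic y)).toReal) →
        (∀ x z, G x z = ((condDistrib Z X μ) x (Set.Iic z)).toReal) →
        (∀ᵐ x ∂(μ.map X), Continuous (F x)) →
        (∀ᵐ x ∂(μ.map X), Continuous (G x)) →
        ∀ (hX : Measurable X),
        CondIndepFun (MeasurableSpace.comap X inferInstance) hX.comap_le Y Z μ →
        μ.map (fun ω => (F (X ω) (Y ω), G (X ω) (Z ω))) =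
          (volume.restrict (Set.Icc 0 1)).prod (volume.restrict (Set.Icc 0 1))) := by
  refine ⟨?_, ?_, ?_⟩
  · -- Part (i)
    intro U hU hUdist F hFc hFmono hFbot hFtop g hg hFg y
    have hF0 : ∀ z, 0 ≤ F z := by
      intro z
      refine le_of_tendsto hFbot ?_
      exact Filter.eventually_atBot.2 ⟨z, fun w hw => hFmono.monotone hw⟩
    have hF1 : ∀ z, F z ≤ 1 := by
      intro z
      refine ge_of_tendsto hFtop ?_
      exact Filter.eventually_atTop.2 ⟨z, fun w hw => hFmono.monotone hw⟩
    have hFy0 : 0 < F y := lt_of_le_of_lt (hF0 (y - 1)) (hFmono (by linarith))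
    have hFy1 : F y < 1 := lt_of_lt_of_le (hFmono (by linarith : y < y + 1)) (hF1 (y + 1))
    have hmap : μ.map (fun ω => g (U ω)) = (volume.restrict (Set.Icc 0 1)).map g := by
      rw [← hUdist]
      exact (Measure.map_map hg hU).symm
    rw [hmap, Measure.map_apply hg measurableSet_Iic,
      Measure.restrict_apply (hg measurableSet_Iic)]
    have hae : volume (g ⁻¹' Set.Iic y ∩ Set.Icc 0 1)
        = volume (g ⁻¹' Set.Iic y ∩ Set.Ioo 0 1) := by
      refine measure_congr ?_
      exact Filter.EventuallyEq.inter (by rfl) Ioo_ae_eq_Icc.symm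
    have hset : g ⁻¹' Set.Iic y ∩ Set.Ioo 0 1 = Set.Ioc 0 (F y) := by
      ext u
      simp only [mem_inter_iff, mem_preimage, mem_Iic, mem_Ioo, mem_Ioc]
      constructor
      · rintro ⟨hgu, hu0, hu1⟩
        refine ⟨hu0, ?_⟩
        have := hFmono.monotone hgu
        rwa [hFg u ⟨hu0, hu1⟩] at this
      · rintro ⟨hu0, huF⟩
        have hu1 : u < 1 := lt_of_le_of_lt huF hFy1
        refine ⟨?_, hu0, hu1⟩
        have : F (g u) ≤ F y := by rw [hFg u ⟨hu0, hu1⟩]; exact huF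
        exact hFmono.le_iff_le.1 this
    rw [hae, hset, Real.volume_Ioc, sub_zero, ENNReal.toReal_ofReal hFy0.le]
  · -- Part (ii)
    intro Y hY F hF hFc
    haveI : IsProbabilityMeasure (μ.map Y) := Measure.isProbabilityMeasure_map hY.aemeasurable
    have h := uniform_of_cdf (μ.map Y) F hF hFc
    rw [← h]
    exact (Measure.map_map hFc.measurable hY).symm
  · -- Part (iii)
    intro X Y Z hXm hY hZ F G hF hG hFcae hGcae hX hind
    have hYZ : Measurable fun ω => (Y ω, Z ω) := hY.prodMk hZ
    have hXYZ : Measurable fun ω => (X ω, (Y ω, Z ω)) := hXm.prodMk hYZ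
    set κY := condDistrib Y X μ with hκY
    set κZ := condDistrib Z X μ with hκZ
    set ν := μ.map X with hν
    haveI : IsProbabilityMeasure ν := Measure.isProbabilityMeasure_map hXm.aemeasurable
    -- joint measurability of F and G
    have hFmeas : Measurable fun p : E × ℝ => F p.1 p.2 := by
      have h1 := (measurable_kernel_Iic κY).ennreal_toReal
      have h2 : (fun p : E × ℝ => F p.1 p.2) = fun p => (κY p.1 (Set.Iic p.2)).toReal := by
        ext p; exact hF p.1 p.2
      rw [h2]; exact h1
    have hGmeas : Measurable fun p : E × ℝ => G p.1 p.2 := by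
      have h1 := (measurable_kernel_Iic κZ).ennreal_toReal
      have h2 : (fun p : E × ℝ => G p.1 p.2) = fun p => (κZ p.1 (Set.Iic p.2)).toReal := by
        ext p; exact hG p.1 p.2
      rw [h2]; exact h1
    have hh : Measurable fun p : E × (ℝ × ℝ) => (F p.1 p.2.1, G p.1 p.2.2) := by
      refine Measurable.prodMk ?_ ?_
      · exact hFmeas.comp (measurable_fst.prodMk measurable_snd.fst)
      · exact hGmeas.comp (measurable_fst.prodMk measurable_snd.snd)
    -- F x, G x measurable for every x (they are monotone)
    have hFm1 : ∀ x, Measurable (F x) := by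
      intro x
      refine Monotone.measurable (fun a b hab => ?_)
      rw [hF x a, hF x b]
      exact ENNReal.toReal_mono (measure_ne_top _ _) (measure_mono (Iic_subset_Iic.2 hab))
    have hGm1 : ∀ x, Measurable (G x) := by
      intro x
      refine Monotone.measurable (fun a b hab => ?_)
      rw [hG x a, hG x b]
      exact ENNReal.toReal_mono (measure_ne_top _ _) (measure_mono (Iic_subset_Iic.2 hab))
    -- key disintegration identity
    have hstar : μ.map (fun ω => (X ω, (Y ω, Z ω))) = ν.compProd (κY ×ₖ κZ) := by
      haveI : IsProbabilityMeasure (μ.map (fun ω => (X ω, (Y ω, Z ω)))) :=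
        Measure.isProbabilityMeasure_map hXYZ.aemeasurable
      refine ext_of_generate_finite
        (Set.image2 (· ×ˢ ·) {A : Set E | MeasurableSet A}
          (Set.image2 (· ×ˢ ·) {s : Set ℝ | MeasurableSet s} {t : Set ℝ | MeasurableSet t}))
        ?_ ?_ ?_ ?_
      · exact (generateFrom_eq_prod MeasurableSpace.generateFrom_measurableSet
          generateFrom_prod isCountablySpanning_measurableSet
          (isCountablySpanning_measurableSet.prod isCountablySpanning_measurableSet)).symm
      · exact IsPiSystem.prod MeasurableSpace.isPiSystem_measurableSet
          (IsPiSystem.prod MeasurableSpace.isPiSystem_measurableSet MeasurableSpace.isPiSystem_measurableSet)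
      · rintro _ ⟨A, hA, _, ⟨s, hs, t, ht, rfl⟩, rfl⟩
        simp only [mem_setOf_eq] at hA hs ht
        -- LHS
        rw [Measure.map_apply hXYZ (hA.prod (hs.prod ht))]
        have hpre : (fun ω => (X ω, (Y ω, Z ω))) ⁻¹' (A ×ˢ s ×ˢ t)
            = X ⁻¹' A ∩ (Y ⁻¹' s ∩ Z ⁻¹' t) := by
          ext ω; simp [Set.mem_prod, and_assoc]
        rw [hpre]
        -- RHS
        rw [Measure.compProd_apply_prod hA (hs.prod ht)]
        simp_rw [Kernel.prod_apply, Measure.prod_prod]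
        rw [hν, setLIntegral_map (f := fun a => κY a s * κZ a t) hA
          ((Kernel.measurable_coe κY hs).mul (Kernel.measurable_coe κZ ht)) hXm]
        -- core identity via conditional independence
        have hfm : Measurable fun ω => κY (X ω) s * κZ (X ω) t :=
          ((Kernel.measurable_coe κY hs).comp hXm).mul ((Kernel.measurable_coe κZ ht).comp hXm)
        have hle1 : ∀ ω, κY (X ω) s * κZ (X ω) t ≤ 1 :=
          fun ω => mul_le_one' prob_le_one prob_le_one
        have hRHSne : (∫⁻ ω in X ⁻¹' A, κY (X ω) s * κZ (X ω) t ∂μ) ≠ ⊤ := by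
          refine ne_top_of_le_ne_top (measure_ne_top μ (X ⁻¹' A)) ?_
          rw [← setLIntegral_one]
          exact lintegral_mono fun ω => hle1 ω
        refine (ENNReal.toReal_eq_toReal_iff' (measure_ne_top μ _) hRHSne).1 ?_
        have hRHS : (∫⁻ ω in X ⁻¹' A, κY (X ω) s * κZ (X ω) t ∂μ).toReal
            = ∫ ω in X ⁻¹' A, (κY (X ω) s).toReal * (κZ (X ω) t).toReal ∂μ := by
          rw [← integral_toReal (hfm.aemeasurable.restrict)
            (Filter.Eventually.of_forall fun ω => lt_of_le_of_lt (hle1 ω) ENNReal.one_lt_top)]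
          simp_rw [ENNReal.toReal_mul]
        rw [hRHS]
        -- conditional expectation computations
        have hind' := (condIndepFun_iff_condExp_inter_preimage_eq_mul
          (m' := MeasurableSpace.comap X inferInstance) (hm' := hX.comap_le) (μ := μ) hY hZ).1 hind s t hs ht
        have hcd1 := condDistrib_ae_eq_condExp (μ := μ) hXm hY hs
        have hcd2 := condDistrib_ae_eq_condExp (μ := μ) hXm hZ ht
        have hprod : (μ⟦Y ⁻¹' s ∩ Z ⁻¹' t | MeasurableSpace.comap X inferInstance⟧)
            =ᵐ[μ] fun ω => (κY (X ω) s).toReal * (κZ (X ω) t).toReal := by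
          filter_upwards [hind', hcd1, hcd2] with ω h1 h2 h3
          rw [h1, ← h2, ← h3]
          rfl
        have hS : MeasurableSet (Y ⁻¹' s ∩ Z ⁻¹' t) := (hY hs).inter (hZ ht)
        have hXA : MeasurableSet[MeasurableSpace.comap X inferInstance] (X ⁻¹' A) :=
          ⟨A, hA, rfl⟩
        have hint : Integrable ((Y ⁻¹' s ∩ Z ⁻¹' t).indicator (fun _ => (1:ℝ))) μ :=
          (integrable_const 1).indicator hS
        calc (μ (X ⁻¹' A ∩ (Y ⁻¹' s ∩ Z ⁻¹' t))).toReal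
            = ∫ ω in X ⁻¹' A, (Y ⁻¹' s ∩ Z ⁻¹' t).indicator (fun _ => (1:ℝ)) ω ∂μ := by
              rw [integral_indicator_const _ hS, measureReal_def, Measure.restrict_apply hS, smul_eq_mul,
                mul_one, inter_comm]
          _ = ∫ ω in X ⁻¹' A,
                (μ⟦Y ⁻¹' s ∩ Z ⁻¹' t | MeasurableSpace.comap X inferInstance⟧) ω ∂μ :=
              (setIntegral_condExp hX.comap_le hint hXA).symm
          _ = ∫ ω in X ⁻¹' A, (κY (X ω) s).toReal * (κZ (X ω) t).toReal ∂μ :=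
              integral_congr_ae (ae_restrict_of_ae hprod)
      · simp
    -- uniformity a.e.
    have hFu : ∀ᵐ x ∂ν, (κY x).map (F x) = volume.restrict (Set.Icc 0 1) := by
      filter_upwards [hFcae] with x hx
      exact uniform_of_cdf (κY x) (F x) (fun y => hF x y) hx
    have hGu : ∀ᵐ x ∂ν, (κZ x).map (G x) = volume.restrict (Set.Icc 0 1) := by
      filter_upwards [hGcae] with x hx
      exact uniform_of_cdf (κZ x) (G x) (fun y => hG x y) hx
    -- conclude
    have hmapeq : μ.map (fun ω => (F (X ω) (Y ω), G (X ω) (Z ω)))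
        = (ν.compProd (κY ×ₖ κZ)).map (fun p : E × (ℝ × ℝ) => (F p.1 p.2.1, G p.1 p.2.2)) := by
      rw [← hstar, Measure.map_map hh hXYZ]
      rfl
    rw [hmapeq]
    ext s hs
    rw [Measure.map_apply hh hs, Measure.compProd_apply (hh hs)]
    have hae : ∀ᵐ x ∂ν, (κY ×ₖ κZ) x
        (Prod.mk x ⁻¹' ((fun p : E × (ℝ × ℝ) => (F p.1 p.2.1, G p.1 p.2.2)) ⁻¹' s))
        = ((volume.restrict (Set.Icc 0 1)).prod (volume.restrict (Set.Icc 0 1))) s := by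
      filter_upwards [hFu, hGu] with x hx1 hx2
      have hpre : Prod.mk x ⁻¹' ((fun p : E × (ℝ × ℝ) => (F p.1 p.2.1, G p.1 p.2.2)) ⁻¹' s)
          = Prod.map (F x) (G x) ⁻¹' s := rfl
      rw [hpre, Kernel.prod_apply,
        ← Measure.map_apply ((hFm1 x).prodMap (hGm1 x)) hs,
        ← Measure.map_prod_map _ _ (hFm1 x) (hGm1 x), hx1, hx2]
    rw [lintegral_congr_ae hae, lintegral_const, measure_univ, mul_one]
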